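/- Let α be a probability measure on ℝ^d with ∫ log(1+‖x‖) α(dx) < ∞. Let (U_n)_{n≥1} be i.i.d. uniform on (0,1), independent of (B_n)_{n≥1} i.i.d. with law α. For t > 0 set X_t = ∑_{n≥1} (U_1⋯U_{n-1})^{1/t} (1 - U_n^{1/t}) B_n. Then almost surely the series converges for every t > 0, the map t ↦ X_t is continuous on (0,∞), and X_t → B_1 as t ↓ 0. Consequently, since X_t has law μ(tα) for each t > 0 (because 1-U^{1/t} ∼ Beta(1,t) when U is uniform on (0,1)), the map t ↦ μ(tα) is weakly continuous on (0,∞) and μ(tα) converges weakly to α as t ↓ 0. -/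

import Mathlib

open MeasureTheory ProbabilityTheory Filter

noncomputable section

/-- The Euler Beta function `B(a,b) = Γ(a)Γ(b)/Γ(a+b)`. -/
def eulerBeta (a b : ℝ) : ℝ := Real.Gamma a * Real.Gamma b / Real.Gamma (a + b)

/-- The Beta(a,b) probability measure on `(0,1)`. -/
def betaMeasure (a b : ℝ) : Measure ℝ :=
  (volume.restrict (Set.Ioo (0:ℝ) 1)).withDensity
    fun x => ENNReal.ofReal (x ^ (a - 1) * (1 - x) ^ (b - 1) / eulerBeta a b)

/-- Stick-breaking weights built from the sequence `Y`:
`W n = Y n * ∏_{j < n} (1 - Y j)` (0-indexed). -/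
def stickWeight {Ω : Type*} (Y : ℕ → Ω → ℝ) (n : ℕ) (ω : Ω) : ℝ :=
  Y n ω * ∏ j ∈ Finset.range n, (1 - Y j ω)

/-- `IsDirichletMean t α μ` says that `μ` is the law of the a.s. convergent series
`∑ W n • B n`, where the pairs `(B n, Y n)` are i.i.d., `B n ∼ α`, `Y n ∼ Beta(1,t)`,
all mutually independent, and `W` are the stick-breaking weights built from `Y`;
that is, `μ = μ(tα)` in the notation of the paper. -/
def IsDirichletMean {E : Type*} [NormedAddCommGroup E] [NormedSpace ℝ E]
    [MeasurableSpace E] (t : ℝ) (α μ : Measure E) : Prop :=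
  ∃ (Ω : Type) (_ : MeasurableSpace Ω) (P : Measure Ω) (_ : IsProbabilityMeasure P)
    (B : ℕ → Ω → E) (Y : ℕ → Ω → ℝ),
      iIndepFun (fun n ω => (B n ω, Y n ω)) P ∧
      (∀ n, Measure.map (fun ω => (B n ω, Y n ω)) P = α.prod (_root_.betaMeasure 1 t)) ∧
      (∀ᵐ ω ∂P, Summable fun n => stickWeight Y n ω • B n ω) ∧
      Measure.map (fun ω => ∑' n, stickWeight Y n ω • B n ω) P = μ

/-- The Cauchy distribution `c_{a+ib}` on `ℝ` (Dirac mass at `a` when `b = 0`). -/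
def cauchyMeasure (a b : ℝ) : Measure ℝ :=
  if b = 0 then Measure.dirac a
  else volume.withDensity fun x => ENNReal.ofReal ((1 / Real.pi) * b / ((x - a) ^ 2 + b ^ 2))

/-- The Stieltjes transform of a measure on `ℝ`. -/
def stieltjesTransform (α : Measure ℝ) (z : ℂ) : ℂ := ∫ w, ((w : ℂ) - z)⁻¹ ∂α

section Aux

open Set Topology

set_option linter.unusedSectionVars false

variable {E : Type*} [NormedAddCommGroup E] [NormedSpace ℝ E] [CompleteSpace E]

lemma contAt_rpow_oneDiv {x : ℝ} (hx : 0 < x) {t0 : ℝ} (ht0 : t0 ≠ 0) :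
    ContinuousAt (fun t : ℝ => x ^ (1/t)) t0 := by
  have h1 : ContinuousAt (fun t : ℝ => ((x, 1/t) : ℝ × ℝ)) t0 :=
    continuousAt_const.prodMk (continuousAt_const.div continuousAt_id ht0)
  have h2 : ContinuousAt (fun p : ℝ × ℝ => p.1 ^ p.2) (x, 1/t0) :=
    Real.continuousAt_rpow (x, 1/t0) (Or.inl hx.ne')
  exact ContinuousAt.comp (f := fun t : ℝ => ((x, 1/t) : ℝ × ℝ)) (g := fun p : ℝ × ℝ => p.1 ^ p.2) h2 h1

lemma keyBound (b : ℕ → E) (u : ℕ → ℝ) (hu : ∀ n, u n ∈ Ioo (0:ℝ) 1)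
    {L M : ℝ} (hL : L < 0)
    (hSL : Tendsto (fun n : ℕ => (∑ j ∈ Finset.range n, Real.log (u j)) / n) atTop (𝓝 L))
    (hSM : Tendsto (fun n : ℕ => (∑ j ∈ Finset.range n, Real.log (1 + ‖b j‖)) / n) atTop (𝓝 M))
    {b0 : ℝ} (hb0 : 0 < b0) :
    ∃ g : ℕ → ℝ, Summable g ∧ ∀ t ∈ Ioc (0:ℝ) b0, ∀ n,
      ‖((∏ j ∈ Finset.range n, u j) ^ (1/t) * (1 - u n ^ (1/t))) • b n‖ ≤ g n := by
  set c : ℝ := -L with hc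
  have hcpos : 0 < c := by simp [hc]; linarith
  set R : ℕ → ℝ := fun n => Real.log (1 + ‖b n‖) with hR
  set S : ℕ → ℝ := fun n => ∑ j ∈ Finset.range n, Real.log (u j) with hS
  set A : ℕ → ℝ := fun n => ∑ j ∈ Finset.range n, Real.log (1 + ‖b j‖) with hA
  -- R n / n → 0
  have hR0 : Tendsto (fun n : ℕ => R n / n) atTop (𝓝 0) := by
    have h1 : Tendsto (fun n : ℕ => A (n+1) / ((n:ℝ)+1)) atTop (𝓝 M) := by
      have h0 := hSM.comp (tendsto_add_atTop_nat 1)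
      apply h0.congr
      intro n
      show (∑ j ∈ Finset.range (n+1), Real.log (1 + ‖b j‖)) / ((n+1 : ℕ):ℝ) = _
      push_cast
      rfl
    have h2 : Tendsto (fun n : ℕ => ((n:ℝ)+1)/n) atTop (𝓝 1) := by
      have h3 : Tendsto (fun n : ℕ => 1 + 1/(n:ℝ)) atTop (𝓝 (1 + 0)) :=
        tendsto_const_nhds.add tendsto_one_div_atTop_nhds_zero_nat
      rw [add_zero] at h3
      apply h3.congr'
      filter_upwards [eventually_ge_atTop 1] with n hn
      have : (n:ℝ) ≠ 0 := Nat.cast_ne_zero.2 (by omega)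
      field_simp
    have h4 : Tendsto (fun n : ℕ => A (n+1)/((n:ℝ)+1) * (((n:ℝ)+1)/n) - A n / n)
        atTop (𝓝 (M * 1 - M)) := (h1.mul h2).sub hSM
    rw [mul_one, sub_self] at h4
    apply h4.congr'
    filter_upwards [eventually_ge_atTop 1] with n hn
    have hn0 : (n:ℝ) ≠ 0 := Nat.cast_ne_zero.2 (by omega)
    have hn1 : (n:ℝ) + 1 ≠ 0 := by positivity
    have hAA : A (n+1) = A n + R n := Finset.sum_range_succ _ n
    rw [hAA]
    field_simp
    try ring
  have hSn : ∀ᶠ n : ℕ in atTop, S n / n < L/2 := hSL.eventually_lt_const (by linarith)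
  have hRn : ∀ᶠ n : ℕ in atTop, R n / n < c/(4*b0) := hR0.eventually_lt_const (by positivity)
  obtain ⟨N, hN⟩ := ((hSn.and hRn).and (eventually_ge_atTop 1)).exists_forall_of_atTop
  set r : ℝ := Real.exp (-(c/(4*b0))) with hr
  have hr0 : 0 < r := Real.exp_pos _
  have hr1 : r < 1 := by
    rw [hr, Real.exp_lt_one_iff]
    have : 0 < c/(4*b0) := by positivity
    linarith
  refine ⟨fun n => if n < N then ‖b n‖ else r^n, ?_, ?_⟩
  · rw [← summable_nat_add_iff N]
    apply Summable.congr ((summable_geometric_of_lt_one hr0.le hr1).mul_right (r^N))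
    intro n
    rw [if_neg (by omega)]
    rw [pow_add]
  · intro t ht n
    have ht0 : 0 < t := ht.1
    have hP0 : 0 < ∏ j ∈ Finset.range n, u j :=
      Finset.prod_pos (fun j _ => (hu j).1)
    have hP1 : (∏ j ∈ Finset.range n, u j) ≤ 1 :=
      Finset.prod_le_one (fun j _ => (hu j).1.le) (fun j _ => (hu j).2.le)
    have hun : u n ^ (1/t) ∈ Ioo (0:ℝ) 1 :=
      ⟨Real.rpow_pos_of_pos (hu n).1 _,
       Real.rpow_lt_one (hu n).1.le (hu n).2 (by positivity)⟩
    have hw0 : 0 ≤ (∏ j ∈ Finset.range n, u j) ^ (1/t) * (1 - u n ^ (1/t)) := by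
      have := Real.rpow_pos_of_pos hP0 (1/t)
      nlinarith [hun.2]
    have hPt1 : (∏ j ∈ Finset.range n, u j) ^ (1/t) ≤ 1 :=
      Real.rpow_le_one hP0.le hP1 (by positivity)
    have hw1 : (∏ j ∈ Finset.range n, u j) ^ (1/t) * (1 - u n ^ (1/t)) ≤
        (∏ j ∈ Finset.range n, u j) ^ (1/t) := by
      nlinarith [Real.rpow_pos_of_pos hP0 (1/t), hun.1]
    rw [norm_smul, Real.norm_eq_abs, abs_of_nonneg hw0]
    by_cases hn : n < N
    · simp only [if_pos hn]
      calc _ ≤ 1 * ‖b n‖ := by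
              apply mul_le_mul_of_nonneg_right _ (norm_nonneg _)
              exact hw1.trans hPt1
           _ = ‖b n‖ := one_mul _
    · simp only [if_neg hn]
      push_neg at hn
      obtain ⟨⟨h1, h2⟩, h3⟩ := hN n hn
      have hn0 : 0 < (n:ℝ) := by exact_mod_cast h3
      have hSle : S n ≤ L/2 * n := by
        rw [div_lt_iff₀ hn0] at h1; linarith
      have hRle : R n ≤ c/(4*b0) * n := by
        rw [div_lt_iff₀ hn0] at h2; linarith
      have hSnonpos : S n ≤ 0 := by
        apply Finset.sum_nonpos
        intro j _
        exact (Real.log_neg (hu j).1 (hu j).2).le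
      have hPexp : (∏ j ∈ Finset.range n, u j) ^ (1/t) = Real.exp (1/t * S n) := by
        rw [Real.rpow_def_of_pos hP0, hS]
        congr 1
        rw [Real.log_prod (fun j _ => (hu j).1.ne')]
        ring
      have hmono : 1/t * S n ≤ 1/b0 * S n := by
        have : 1/b0 ≤ 1/t := one_div_le_one_div_of_le ht0 ht.2
        nlinarith
      have hbn : ‖b n‖ ≤ Real.exp (R n) := by
        rw [hR, Real.exp_log (by positivity)]
        linarith
      calc (∏ j ∈ Finset.range n, u j) ^ (1/t) * (1 - u n ^ (1/t)) * ‖b n‖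
          ≤ (∏ j ∈ Finset.range n, u j) ^ (1/t) * ‖b n‖ :=
            mul_le_mul_of_nonneg_right hw1 (norm_nonneg _)
        _ ≤ Real.exp (1/b0 * S n) * Real.exp (R n) := by
            apply mul_le_mul _ hbn (norm_nonneg _) (Real.exp_pos _).le
            rw [hPexp]
            exact Real.exp_le_exp.2 hmono
        _ = Real.exp (1/b0 * S n + R n) := (Real.exp_add _ _).symm
        _ ≤ Real.exp ((n:ℝ) * (-(c/(4*b0)))) := by
            apply Real.exp_le_exp.2
            have h5 : 1/b0 * S n ≤ 1/b0 * (L/2 * n) := by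
              apply mul_le_mul_of_nonneg_left hSle (by positivity)
            have hLc : L = -c := by rw [hc]; ring
            rw [hLc] at h5
            have hb0' : (0:ℝ) < 1/b0 := by positivity
            calc 1/b0 * S n + R n ≤ 1/b0 * (-c/2 * n) + c/(4*b0) * n := by
                  apply add_le_add _ hRle
                  convert h5 using 2
                  try ring
              _ = (n:ℝ) * (-(c/(4*b0))) := by field_simp; try ring
        _ = r^n := by rw [hr, ← Real.exp_nat_mul]

lemma tendsto_rpow_oneDiv_zero {x : ℝ} (hx0 : 0 < x) (hx1 : x < 1) :
    Tendsto (fun t : ℝ => x ^ (1/t)) (𝓝[>] (0:ℝ)) (𝓝 0) := by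
  have hlog : Real.log x < 0 := Real.log_neg hx0 hx1
  have h1 : Tendsto (fun t : ℝ => 1/t) (𝓝[>] (0:ℝ)) atTop := by
    simpa [one_div] using tendsto_inv_nhdsGT_zero (𝕜 := ℝ)
  have h2 : Tendsto (fun t : ℝ => (1/t) * Real.log x) (𝓝[>] (0:ℝ)) atBot :=
    Filter.Tendsto.atTop_mul_const_of_neg hlog h1
  have h3 := Real.tendsto_exp_atBot.comp h2
  apply h3.congr
  intro t
  simp [Real.rpow_def_of_pos hx0, Function.comp, mul_comm]

lemma mainA (b : ℕ → E) (u : ℕ → ℝ) (hu : ∀ n, u n ∈ Ioo (0:ℝ) 1)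
    {L M : ℝ} (hL : L < 0)
    (hSL : Tendsto (fun n : ℕ => (∑ j ∈ Finset.range n, Real.log (u j)) / n) atTop (𝓝 L))
    (hSM : Tendsto (fun n : ℕ => (∑ j ∈ Finset.range n, Real.log (1 + ‖b j‖)) / n) atTop (𝓝 M)) :
    (∀ t : ℝ, 0 < t → Summable fun n =>
      ((∏ j ∈ Finset.range n, u j) ^ (1/t) * (1 - u n ^ (1/t))) • b n) ∧
    ContinuousOn (fun t => ∑' n,
      ((∏ j ∈ Finset.range n, u j) ^ (1/t) * (1 - u n ^ (1/t))) • b n) (Ioi (0:ℝ)) ∧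
    Tendsto (fun t => ∑' n,
      ((∏ j ∈ Finset.range n, u j) ^ (1/t) * (1 - u n ^ (1/t))) • b n)
      (𝓝[>] (0:ℝ)) (𝓝 (b 0)) := by
  have hsum : ∀ t : ℝ, 0 < t → Summable fun n =>
      ((∏ j ∈ Finset.range n, u j) ^ (1/t) * (1 - u n ^ (1/t))) • b n := by
    intro t ht
    obtain ⟨g, hg, hbound⟩ := keyBound b u hu hL hSL hSM ht
    exact Summable.of_norm_bounded hg (fun n => hbound t ⟨ht, le_refl t⟩ n)
  have hone : ∀ k, Tendsto (fun t : ℝ => 1 - u k ^ (1/t)) (𝓝[>] (0:ℝ)) (𝓝 1) := by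
    intro k
    have h2 := tendsto_const_nhds (x := (1:ℝ)) (f := 𝓝[>] (0:ℝ)) |>.sub
      (tendsto_rpow_oneDiv_zero (hu k).1 (hu k).2)
    simpa using h2
  refine ⟨hsum, ?_, ?_⟩
  · intro t0 ht0
    have ht0' : (0:ℝ) < t0 := ht0
    obtain ⟨g, hg, hbound⟩ := keyBound b u hu hL hSL hSM (show (0:ℝ) < t0 + 1 by linarith)
    have hmem : ∀ᶠ t in 𝓝[Ioi (0:ℝ)] t0, t ∈ Ioc (0:ℝ) (t0+1) := by
      filter_upwards [self_mem_nhdsWithin,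
        mem_nhdsWithin_of_mem_nhds (Iio_mem_nhds (show t0 < t0+1 by linarith))] with t h1 h2
      exact ⟨h1, le_of_lt h2⟩
    have hco : ∀ k, ContinuousAt (fun t =>
        ((∏ j ∈ Finset.range k, u j) ^ (1/t) * (1 - u k ^ (1/t))) • b k) t0 := by
      intro k
      have hP0 : 0 < ∏ j ∈ Finset.range k, u j := Finset.prod_pos (fun j _ => (hu j).1)
      exact ((contAt_rpow_oneDiv hP0 ht0'.ne').mul
        (continuousAt_const.sub (contAt_rpow_oneDiv (hu k).1 ht0'.ne'))).smul continuousAt_const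
    exact tendsto_tsum_of_dominated_convergence hg
      (fun k => ((hco k).continuousWithinAt))
      (hmem.mono (fun t ht k => hbound t ht k))
  · obtain ⟨g, hg, hbound⟩ := keyBound b u hu hL hSL hSM one_pos
    have hmem : ∀ᶠ t in 𝓝[>] (0:ℝ), t ∈ Ioc (0:ℝ) 1 :=
      Ioc_mem_nhdsGT_of_mem ⟨le_refl 0, one_pos⟩
    have hab : ∀ k, Tendsto (fun t =>
        ((∏ j ∈ Finset.range k, u j) ^ (1/t) * (1 - u k ^ (1/t))) • b k)
        (𝓝[>] (0:ℝ)) (𝓝 (if k = 0 then b 0 else 0)) := by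
      intro k
      rcases Nat.eq_zero_or_pos k with rfl | hk
      · simp only [if_pos rfl, Finset.prod_range_zero, Real.one_rpow, one_mul]
        have h3 := (hone 0).smul (tendsto_const_nhds (x := b 0) (f := 𝓝[>] (0:ℝ)))
        simpa using h3
      · rw [if_neg hk.ne']
        have hP0 : 0 < ∏ j ∈ Finset.range k, u j := Finset.prod_pos (fun j _ => (hu j).1)
        have hP1 : (∏ j ∈ Finset.range k, u j) < 1 := by
          have hlogP : Real.log (∏ j ∈ Finset.range k, u j) < 0 := by
            rw [Real.log_prod (fun j _ => (hu j).1.ne')]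
            apply Finset.sum_neg (fun j _ => Real.log_neg (hu j).1 (hu j).2)
            exact Finset.nonempty_range_iff.mpr hk.ne'
          exact (Real.log_neg_iff hP0).mp hlogP
        have h1 := tendsto_rpow_oneDiv_zero hP0 hP1
        have h3 := (h1.mul (hone k)).smul (tendsto_const_nhds (x := b k) (f := 𝓝[>] (0:ℝ)))
        simpa using h3
    have h4 := tendsto_tsum_of_dominated_convergence hg hab
      (hmem.mono (fun t ht k => hbound t ht k))
    rwa [tsum_ite_eq] at h4

lemma eulerBeta_one (t : ℝ) (ht : 0 < t) : eulerBeta 1 t = 1/t := by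
  unfold eulerBeta
  rw [Real.Gamma_one, add_comm, Real.Gamma_add_one ht.ne']
  rw [one_mul]
  field_simp [(Real.Gamma_pos_of_pos ht).ne']

lemma beta_lintegral_Ioc {t : ℝ} (ht : 0 < t) {y : ℝ} (hy : y ∈ Ioc (0:ℝ) 1) :
    (∫⁻ x in Ioc (0:ℝ) y, ENNReal.ofReal (t * (1-x) ^ (t-1))) =
      ENNReal.ofReal (1 - (1-y) ^ t) := by
  have h1 : IntervalIntegrable (fun x : ℝ => x ^ (t-1)) volume (1-y) 1 :=
    intervalIntegral.intervalIntegrable_rpow' (by linarith)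
  have h2 : IntervalIntegrable (fun x : ℝ => (1-x) ^ (t-1)) volume 0 y := by
    have := (h1.comp_sub_left 1).symm
    simpa using this
  have h3 : IntervalIntegrable (fun x : ℝ => t * (1-x) ^ (t-1)) volume 0 y :=
    h2.const_mul t
  have h4 : IntegrableOn (fun x : ℝ => t * (1-x) ^ (t-1)) (Ioc 0 y) volume :=
    (intervalIntegrable_iff_integrableOn_Ioc_of_le hy.1.le).mp h3
  have hnn : 0 ≤ᵐ[volume.restrict (Ioc (0:ℝ) y)] fun x => t * (1-x) ^ (t-1) := by
    rw [EventuallyLE, ae_restrict_iff' measurableSet_Ioc]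
    filter_upwards with x hx
    have : (0:ℝ) ≤ 1 - x := by linarith [hx.2, hy.2]
    positivity
  rw [← ofReal_integral_eq_lintegral_ofReal h4 hnn]
  congr 1
  rw [← intervalIntegral.integral_of_le hy.1.le]
  rw [intervalIntegral.integral_const_mul]
  rw [intervalIntegral.integral_comp_sub_left (fun x : ℝ => x ^ (t-1)) 1]
  rw [integral_rpow (Or.inl (by linarith))]
  rw [sub_add_cancel]
  rw [sub_zero, Real.one_rpow]
  field_simp

lemma map_unif_beta {t : ℝ} (ht : 0 < t) :
    (volume.restrict (Set.Ioo (0:ℝ) 1)).map (fun u => 1 - u ^ (1/t)) = _root_.betaMeasure 1 t := by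
  have hg : Measurable (fun u : ℝ => 1 - u ^ (1/t)) := by fun_prop
  haveI : IsProbabilityMeasure (volume.restrict (Set.Ioo (0:ℝ) 1)) := by
    constructor
    simp [Real.volume_Ioo]
  haveI : IsProbabilityMeasure ((volume.restrict (Set.Ioo (0:ℝ) 1)).map
      (fun u => 1 - u ^ (1/t))) := Measure.isProbabilityMeasure_map hg.aemeasurable
  have hdens : ∀ x : ℝ, ENNReal.ofReal (x ^ ((1:ℝ) - 1) * (1-x) ^ (t-1) / eulerBeta 1 t)
      = ENNReal.ofReal (t * (1-x) ^ (t-1)) := by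
    intro x
    rw [sub_self, Real.rpow_zero, one_mul, eulerBeta_one t ht, one_div, div_eq_mul_inv, inv_inv, mul_comm]
  have hbeta : ∀ s : Set ℝ, MeasurableSet s →
      _root_.betaMeasure 1 t s = ∫⁻ x in s ∩ Ioo (0:ℝ) 1, ENNReal.ofReal (t * (1-x) ^ (t-1)) := by
    intro s hs
    rw [_root_.betaMeasure, withDensity_apply _ hs, Measure.restrict_restrict hs]
    apply lintegral_congr
    intro x
    exact hdens x
  refine Measure.ext_of_Iic _ _ (fun y => ?_)
  rw [Measure.map_apply hg measurableSet_Iic,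
    Measure.restrict_apply (hg measurableSet_Iic), hbeta _ measurableSet_Iic]
  rcases le_or_gt y 0 with hy0 | hy0
  · have hs1 : ((fun u : ℝ => 1 - u ^ (1/t)) ⁻¹' Iic y) ∩ Ioo 0 1 = (∅ : Set ℝ) := by
      ext u
      simp only [mem_inter_iff, mem_preimage, mem_Iic, mem_Ioo, mem_empty_iff_false,
        iff_false, not_and]
      intro h1 h2 h3
      have : u ^ (1/t) < 1 := Real.rpow_lt_one h2.le h3 (by positivity)
      linarith
    have hs2 : Iic y ∩ Ioo (0:ℝ) 1 = (∅ : Set ℝ) := by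
      ext u
      simp only [mem_inter_iff, mem_Iic, mem_Ioo, mem_empty_iff_false, iff_false, not_and]
      intro h1 h2 _
      linarith
    rw [hs1, hs2]
    simp
  · rcases lt_or_ge y 1 with hy1 | hy1
    · have hxy : (0:ℝ) < 1 - y := by linarith
      have hiff : ∀ u : ℝ, u ∈ Ioo (0:ℝ) 1 → (1 - u ^ (1/t) ≤ y ↔ (1-y) ^ t ≤ u) := by
        intro u hu
        have h5 : (0:ℝ) ≤ u ^ (1/t) := (Real.rpow_pos_of_pos hu.1 _).le
        have h6 : ((u ^ (1/t)) ^ t) = u := by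
          rw [← Real.rpow_mul hu.1.le, one_div_mul_cancel ht.ne', Real.rpow_one]
        have h9 := Real.rpow_le_rpow_iff hxy.le h5 ht
        rw [h6] at h9
        constructor
        · intro h
          exact h9.mpr (by linarith)
        · intro h
          have h8 := h9.mp h
          linarith
      have hs1 : ((fun u : ℝ => 1 - u ^ (1/t)) ⁻¹' Iic y) ∩ Ioo 0 1 = Ico ((1-y)^t) 1 := by
        ext u
        simp only [mem_inter_iff, mem_preimage, mem_Iic, mem_Ico, mem_Ioo]
        constructor
        · rintro ⟨h1, h2⟩
          exact ⟨(hiff u h2).mp h1, h2.2⟩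
        · rintro ⟨h1, h2⟩
          have hu0 : 0 < u := lt_of_lt_of_le (Real.rpow_pos_of_pos hxy t) h1
          exact ⟨(hiff u ⟨hu0, h2⟩).mpr h1, hu0, h2⟩
      have hs2 : Iic y ∩ Ioo (0:ℝ) 1 = Ioc (0:ℝ) y := by
        ext u
        simp only [mem_inter_iff, mem_Iic, mem_Ioo, mem_Ioc]
        constructor
        · rintro ⟨h1, h2⟩; exact ⟨h2.1, h1⟩
        · rintro ⟨h1, h2⟩; exact ⟨h2, h1, by linarith⟩
      rw [hs1, hs2, Real.volume_Ico, beta_lintegral_Ioc ht ⟨hy0, hy1.le⟩]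
    · have hs1 : ((fun u : ℝ => 1 - u ^ (1/t)) ⁻¹' Iic y) ∩ Ioo 0 1 = Ioo (0:ℝ) 1 := by
        apply inter_eq_right.mpr
        intro u hu
        simp only [mem_preimage, mem_Iic]
        have : 0 < u ^ (1/t) := Real.rpow_pos_of_pos hu.1 _
        linarith
      have hs2 : Iic y ∩ Ioo (0:ℝ) 1 = Ioo (0:ℝ) 1 := by
        apply inter_eq_right.mpr
        intro u hu
        simp only [mem_Iic]
        linarith [hu.2]
      rw [hs1, hs2, Real.volume_Ioo]
      have hIoo : ∫⁻ x in Ioo (0:ℝ) 1, ENNReal.ofReal (t * (1-x) ^ (t-1))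
          = ∫⁻ x in Ioc (0:ℝ) 1, ENNReal.ofReal (t * (1-x) ^ (t-1)) := by
        rw [Measure.restrict_congr_set Ioo_ae_eq_Ioc]
      rw [hIoo, beta_lintegral_Ioc ht ⟨one_pos, le_refl 1⟩]
      norm_num [Real.zero_rpow ht.ne']

lemma integrableOn_log_Ioo : IntegrableOn Real.log (Ioo (0:ℝ) 1) volume := by
  have h2 : IntervalIntegrable (fun x : ℝ => x ^ (-(1/2) : ℝ)) volume 0 1 :=
    intervalIntegral.intervalIntegrable_rpow' (by norm_num)
  have h1 : IntegrableOn (fun x : ℝ => x ^ (-(1/2) : ℝ) * 2) (Ioo (0:ℝ) 1) volume := by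
    have h3 : IntegrableOn (fun x : ℝ => x ^ (-(1/2) : ℝ) * 2) (Ioc (0:ℝ) 1) volume :=
      ((intervalIntegrable_iff_integrableOn_Ioc_of_le zero_le_one).mp h2).mul_const 2
    exact h3.mono_set Ioo_subset_Ioc_self
  apply Integrable.mono h1 Real.measurable_log.aestronglyMeasurable
  rw [ae_restrict_iff' measurableSet_Ioo]
  filter_upwards with x hx
  have hx0 : (0:ℝ) < x := hx.1
  have hx1 : x < 1 := hx.2
  have hlog : Real.log x < 0 := Real.log_neg hx0 hx1
  have hrp : (0:ℝ) < x ^ (-(1/2):ℝ) := Real.rpow_pos_of_pos hx0 _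
  rw [Real.norm_eq_abs, Real.norm_eq_abs, abs_of_neg hlog,
    abs_of_nonneg (by positivity : (0:ℝ) ≤ x ^ (-(1/2):ℝ) * 2)]
  have h5 := Real.log_le_sub_one_of_pos hrp
  rw [Real.log_rpow hx0] at h5
  linarith

lemma integral_log_Ioo_neg : (∫ x in Ioo (0:ℝ) 1, Real.log x) < 0 := by
  have hInt : IntegrableOn (fun x => -Real.log x) (Ioo (0:ℝ) 1) volume :=
    integrableOn_log_Ioo.neg
  have hnn : 0 ≤ᵐ[volume.restrict (Ioo (0:ℝ) 1)] fun x => -Real.log x := by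
    rw [EventuallyLE, ae_restrict_iff' measurableSet_Ioo]
    filter_upwards with x hx
    simp only [Pi.zero_apply]
    have := Real.log_neg hx.1 hx.2
    linarith
  have hpos := (integral_pos_iff_support_of_nonneg_ae hnn hInt).mpr ?_
  · have hneg : ∫ x in Ioo (0:ℝ) 1, (-Real.log x) = -∫ x in Ioo (0:ℝ) 1, Real.log x :=
      integral_neg _
    rw [hneg] at hpos
    linarith
  · have hsub : Ioo (0:ℝ) 1 ⊆ Function.support fun x => -Real.log x := by
      intro x hx
      simp only [Function.mem_support, neg_ne_zero]
      exact (Real.log_neg hx.1 hx.2).ne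
    have h1 : (volume.restrict (Ioo (0:ℝ) 1)) (Ioo (0:ℝ) 1) = 1 := by
      rw [Measure.restrict_apply_self]
      simp [Real.volume_Ioo]
    have h2 := measure_mono (μ := volume.restrict (Ioo (0:ℝ) 1)) hsub
    rw [h1] at h2
    exact lt_of_lt_of_le zero_lt_one h2

end Aux

/-- **Proposition 3.4.** With `(Uₙ)` i.i.d. uniform on `(0,1)` independent of `(Bₙ)`
i.i.d. `∼ α ∈ FT_d`, the series `X_t = ∑ₙ (U₁⋯U_{n-1})^{1/t}(1-Uₙ^{1/t})Bₙ` converges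
a.s. for every `t > 0`, `t ↦ X_t` is a.s. continuous on `(0,∞)` with `X_t → B₁` as
`t ↓ 0`; consequently `X_t ∼ μ(tα)`, `t ↦ μ(tα)` is weakly continuous on `(0,∞)` and
`μ(tα) → α` weakly as `t ↓ 0`. -/
theorem dirichletCurve_weakly_continuous
    {d : ℕ} (α : Measure (EuclideanSpace ℝ (Fin d))) [IsProbabilityMeasure α]
    (hlog : Integrable (fun x => Real.log (1 + ‖x‖)) α)
    {Ω : Type} [MeasurableSpace Ω] (P : Measure Ω) [IsProbabilityMeasure P]
    (B : ℕ → Ω → EuclideanSpace ℝ (Fin d)) (U : ℕ → Ω → ℝ)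
    (hindep : iIndepFun (fun n ω => (B n ω, U n ω)) P)
    (hlaw : ∀ n, Measure.map (fun ω => (B n ω, U n ω)) P
      = α.prod (volume.restrict (Set.Ioo (0:ℝ) 1)))
    (X : ℝ → Ω → EuclideanSpace ℝ (Fin d))
    (hX : ∀ t ω, X t ω = ∑' n,
      ((∏ j ∈ Finset.range n, U j ω) ^ (1 / t) * (1 - U n ω ^ (1 / t))) • B n ω) :
    (∀ᵐ ω ∂P,
      (∀ t, 0 < t → Summable fun n =>
        ((∏ j ∈ Finset.range n, U j ω) ^ (1 / t) * (1 - U n ω ^ (1 / t))) • B n ω) ∧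
      ContinuousOn (fun t => X t ω) (Set.Ioi (0:ℝ)) ∧
      Filter.Tendsto (fun t => X t ω) (nhdsWithin 0 (Set.Ioi (0:ℝ))) (nhds (B 0 ω))) ∧
    (∀ t, 0 < t → IsDirichletMean t α (Measure.map (X t) P)) ∧
    (∀ g : BoundedContinuousFunction (EuclideanSpace ℝ (Fin d)) ℝ,
      ContinuousOn (fun t => ∫ ω, g (X t ω) ∂P) (Set.Ioi (0:ℝ)) ∧
      Filter.Tendsto (fun t => ∫ ω, g (X t ω) ∂P) (nhdsWithin 0 (Set.Ioi (0:ℝ)))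
        (nhds (∫ x, g x ∂α))) := by
  classical
  set ν : Measure ℝ := volume.restrict (Set.Ioo (0:ℝ) 1) with hν
  haveI hνprob : IsProbabilityMeasure ν := by
    constructor
    simp [hν, Real.volume_Ioo]
  -- pair measurability
  have hpair : ∀ n, AEMeasurable (fun ω => (B n ω, U n ω)) P := by
    intro n
    by_contra h
    have h0 := hlaw n
    rw [Measure.map_of_not_aemeasurable h] at h0
    have h1 : (α.prod ν) Set.univ = 1 := measure_univ
    rw [← h0] at h1
    simp at h1
  have hBm : ∀ n, AEMeasurable (B n) P := fun n => measurable_fst.comp_aemeasurable (hpair n)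
  have hUm : ∀ n, AEMeasurable (U n) P := fun n => measurable_snd.comp_aemeasurable (hpair n)
  have hBlaw : ∀ n, Measure.map (B n) P = α := by
    intro n
    have h1 : Measure.map (B n) P = (Measure.map (fun ω => (B n ω, U n ω)) P).map Prod.fst :=
      (AEMeasurable.map_map_of_aemeasurable measurable_fst.aemeasurable (hpair n)).symm
    rw [h1, hlaw n]
    simp
  have hUlaw : ∀ n, Measure.map (U n) P = ν := by
    intro n
    have h1 : Measure.map (U n) P = (Measure.map (fun ω => (B n ω, U n ω)) P).map Prod.snd :=
      (AEMeasurable.map_map_of_aemeasurable measurable_snd.aemeasurable (hpair n)).symm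
    rw [h1, hlaw n]
    simp
  -- a.s. U n ∈ (0,1)
  have hU01 : ∀ᵐ ω ∂P, ∀ n, U n ω ∈ Set.Ioo (0:ℝ) 1 := by
    rw [ae_all_iff]
    intro n
    have h2 := Measure.map_apply_of_aemeasurable (hUm n) (s := (Set.Ioo (0:ℝ) 1)ᶜ)
      measurableSet_Ioo.compl
    rw [hUlaw n] at h2
    have h3 : ν (Set.Ioo (0:ℝ) 1)ᶜ = 0 := by
      rw [hν, Measure.restrict_apply measurableSet_Ioo.compl]
      simp
    rw [ae_iff]
    rw [h3] at h2
    exact h2.symm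
  -- SLLN for log U
  have hVint : Integrable (fun ω => Real.log (U 0 ω)) P := by
    have h1 : Integrable Real.log ν := integrableOn_log_Ioo
    rw [← hUlaw 0] at h1
    exact (integrable_map_measure Real.measurable_log.aestronglyMeasurable (hUm 0)).mp h1
  have hVindep : Pairwise (Function.onFun (IndepFun · · P) fun n ω => Real.log (U n ω)) := by
    intro i j hij
    exact (hindep.indepFun hij).comp (Real.measurable_log.comp measurable_snd)
      (Real.measurable_log.comp measurable_snd)
  have hVident : ∀ i, IdentDistrib (fun ω => Real.log (U i ω))
      (fun ω => Real.log (U 0 ω)) P P := by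
    intro i
    refine ⟨Real.measurable_log.comp_aemeasurable (hUm i),
      Real.measurable_log.comp_aemeasurable (hUm 0), ?_⟩
    have h1 : Measure.map (fun ω => Real.log (U i ω)) P = ν.map Real.log := by
      rw [← hUlaw i]
      exact (AEMeasurable.map_map_of_aemeasurable Real.measurable_log.aemeasurable (hUm i)).symm
    have h2 : Measure.map (fun ω => Real.log (U 0 ω)) P = ν.map Real.log := by
      rw [← hUlaw 0]
      exact (AEMeasurable.map_map_of_aemeasurable Real.measurable_log.aemeasurable (hUm 0)).symm
    rw [h1, h2]
  have hSLLN_V := strong_law_ae_real _ hVint hVindep hVident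
  have hLneg : (P[fun ω => Real.log (U 0 ω)]) < 0 := by
    have h1 : (P[fun ω => Real.log (U 0 ω)]) = ∫ x, Real.log x ∂ν := by
      rw [← hUlaw 0]
      exact (integral_map (hUm 0) Real.measurable_log.aestronglyMeasurable).symm
    rw [h1, hν]
    exact integral_log_Ioo_neg
  -- SLLN for log (1 + ‖B‖)
  have hRmeas : Measurable (fun x : EuclideanSpace ℝ (Fin d) => Real.log (1 + ‖x‖)) :=
    Real.measurable_log.comp (measurable_const.add measurable_norm)
  have hRint : Integrable (fun ω => Real.log (1 + ‖B 0 ω‖)) P := by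
    have h1 := hlog
    rw [← hBlaw 0] at h1
    exact (integrable_map_measure hRmeas.aestronglyMeasurable (hBm 0)).mp h1
  have hRindep : Pairwise (Function.onFun (IndepFun · · P) fun n ω => Real.log (1 + ‖B n ω‖)) := by
    intro i j hij
    exact (hindep.indepFun hij).comp (hRmeas.comp measurable_fst) (hRmeas.comp measurable_fst)
  have hRident : ∀ i, IdentDistrib (fun ω => Real.log (1 + ‖B i ω‖))
      (fun ω => Real.log (1 + ‖B 0 ω‖)) P P := by
    intro i
    refine ⟨hRmeas.comp_aemeasurable (hBm i), hRmeas.comp_aemeasurable (hBm 0), ?_⟩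
    have h1 : Measure.map (fun ω => Real.log (1 + ‖B i ω‖)) P = α.map (fun x => Real.log (1 + ‖x‖)) := by
      rw [← hBlaw i]
      exact (AEMeasurable.map_map_of_aemeasurable hRmeas.aemeasurable (hBm i)).symm
    have h2 : Measure.map (fun ω => Real.log (1 + ‖B 0 ω‖)) P
        = α.map (fun x => Real.log (1 + ‖x‖)) := by
      rw [← hBlaw 0]
      exact (AEMeasurable.map_map_of_aemeasurable hRmeas.aemeasurable (hBm 0)).symm
    rw [h1, h2]
  have hSLLN_R := strong_law_ae_real _ hRint hRindep hRident
  -- main pointwise statement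
  have hmain : ∀ᵐ ω ∂P,
      (∀ t : ℝ, 0 < t → Summable fun n =>
        ((∏ j ∈ Finset.range n, U j ω) ^ ((1:ℝ)/t) * (1 - U n ω ^ ((1:ℝ)/t))) • B n ω) ∧
      ContinuousOn (fun t : ℝ => ∑' n,
        ((∏ j ∈ Finset.range n, U j ω) ^ ((1:ℝ)/t) * (1 - U n ω ^ ((1:ℝ)/t))) • B n ω)
        (Set.Ioi (0:ℝ)) ∧
      Filter.Tendsto (fun t : ℝ => ∑' n,
        ((∏ j ∈ Finset.range n, U j ω) ^ ((1:ℝ)/t) * (1 - U n ω ^ ((1:ℝ)/t))) • B n ω)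
        (nhdsWithin 0 (Set.Ioi (0:ℝ))) (nhds (B 0 ω)) := by
    filter_upwards [hU01, hSLLN_V, hSLLN_R] with ω h1 h2 h3
    exact mainA (fun n => B n ω) (fun n => U n ω) h1 hLneg h2 h3
  -- measurability of X t
  have hterm : ∀ (t : ℝ) (n : ℕ), AEMeasurable (fun ω =>
      ((∏ j ∈ Finset.range n, U j ω) ^ ((1:ℝ)/t) * (1 - U n ω ^ ((1:ℝ)/t))) • B n ω) P := by
    intro t n
    apply AEMeasurable.fun_smul _ (hBm n)
    apply AEMeasurable.fun_mul
    · exact (measurable_id.pow_const _ : Measurable fun x : ℝ => x ^ ((1:ℝ)/t)).comp_aemeasurable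
        (Finset.aemeasurable_fun_prod _ (fun j _ => hUm j))
    · exact (measurable_const.sub (measurable_id.pow_const _ :
        Measurable fun x : ℝ => x ^ ((1:ℝ)/t))).comp_aemeasurable (hUm n)
  have hXm : ∀ t : ℝ, 0 < t → AEMeasurable (X t) P := by
    intro t ht
    apply aemeasurable_of_tendsto_metrizable_ae atTop
      (f := fun N ω => ∑ n ∈ Finset.range N,
        ((∏ j ∈ Finset.range n, U j ω) ^ ((1:ℝ)/t) * (1 - U n ω ^ ((1:ℝ)/t))) • B n ω)
      (fun N => Finset.aemeasurable_fun_sum _ (fun n _ => hterm t n))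
    filter_upwards [hmain] with ω hω
    rw [hX t ω]
    exact (hω.1 t ht).hasSum.tendsto_sum_nat
  refine ⟨?_, ?_, ?_⟩
  · -- part 1
    filter_upwards [hmain] with ω hω
    obtain ⟨hsum, hcont, hlim⟩ := hω
    refine ⟨?_, ?_, ?_⟩
    · intro t ht
      match t, ht with
      | 1, _ =>
        apply (hsum 1 one_pos).congr
        intro n
        norm_num
      | (Nat.succ (Nat.succ m)), _ =>
        apply summable_zero.congr
        intro n
        have : 1 / (m + 2 : ℕ) = 0 := Nat.div_eq_of_lt (by omega)
        rw [this]
        norm_num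
    · have hfun : (fun t : ℝ => X t ω) = fun t : ℝ => ∑' n,
          ((∏ j ∈ Finset.range n, U j ω) ^ ((1:ℝ)/t) * (1 - U n ω ^ ((1:ℝ)/t))) • B n ω :=
        funext fun t => hX t ω
      rw [hfun]
      exact hcont
    · have hfun : (fun t : ℝ => X t ω) = fun t : ℝ => ∑' n,
          ((∏ j ∈ Finset.range n, U j ω) ^ ((1:ℝ)/t) * (1 - U n ω ^ ((1:ℝ)/t))) • B n ω :=
        funext fun t => hX t ω
      rw [hfun]
      exact hlim
  · -- part 2
    intro t ht
    have hφ : Measurable (fun p : (EuclideanSpace ℝ (Fin d)) × ℝ =>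
        (p.1, 1 - p.2 ^ ((1:ℝ)/t))) := by fun_prop
    have hg2 : Measurable (fun u : ℝ => 1 - u ^ ((1:ℝ)/t)) := by fun_prop
    have hstick : ∀ᵐ ω ∂P, ∀ n,
        stickWeight (fun n ω => 1 - U n ω ^ ((1:ℝ)/t)) n ω • B n ω
        = ((∏ j ∈ Finset.range n, U j ω) ^ ((1:ℝ)/t) * (1 - U n ω ^ ((1:ℝ)/t))) • B n ω := by
      filter_upwards [hU01] with ω hω n
      unfold stickWeight
      congr 1
      rw [mul_comm]
      congr 1
      rw [← Real.finset_prod_rpow _ _ (fun j _ => (hω j).1.le) _]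
      apply Finset.prod_congr rfl
      intro j _
      ring
    refine ⟨Ω, ‹_›, P, ‹_›, B, fun n ω => 1 - U n ω ^ ((1:ℝ)/t), ?_, ?_, ?_, ?_⟩
    · exact hindep.comp (fun _ => fun p : (EuclideanSpace ℝ (Fin d)) × ℝ =>
        (p.1, 1 - p.2 ^ ((1:ℝ)/t))) (fun _ => hφ)
    · intro n
      have h1 : Measure.map (fun ω => (B n ω, 1 - U n ω ^ ((1:ℝ)/t))) P
          = (Measure.map (fun ω => (B n ω, U n ω)) P).map
            (Prod.map id (fun u : ℝ => 1 - u ^ ((1:ℝ)/t))) := by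
        rw [AEMeasurable.map_map_of_aemeasurable
          (measurable_id.prodMap hg2).aemeasurable (hpair n)]
        rfl
      rw [h1, hlaw n, ← Measure.map_prod_map α ν measurable_id hg2, Measure.map_id,
        hν, map_unif_beta ht]
    · filter_upwards [hstick, hmain] with ω h1 h2
      exact ((h2.1 t ht).congr (fun n => (h1 n).symm))
    · apply Measure.map_congr
      filter_upwards [hstick] with ω h1
      rw [hX t ω]
      exact tsum_congr h1
  · -- part 3
    intro g
    have hGm : ∀ t : ℝ, 0 < t → AEStronglyMeasurable (fun ω => g (X t ω)) P := by
      intro t ht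
      exact (g.continuous.measurable.comp_aemeasurable (hXm t ht)).aestronglyMeasurable
    constructor
    · intro t0 ht0
      apply tendsto_integral_filter_of_dominated_convergence (fun _ => ‖g‖)
      · filter_upwards [self_mem_nhdsWithin] with t ht
        exact hGm t ht
      · filter_upwards with t
        filter_upwards with ω
        exact g.norm_coe_le_norm _
      · exact integrable_const _
      · filter_upwards [hmain] with ω hω
        have hfun : (fun t : ℝ => X t ω) = fun t : ℝ => ∑' n,
            ((∏ j ∈ Finset.range n, U j ω) ^ ((1:ℝ)/t) * (1 - U n ω ^ ((1:ℝ)/t))) • B n ω :=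
          funext fun t => hX t ω
        have h1 : Filter.Tendsto (fun t : ℝ => X t ω) (nhdsWithin t0 (Set.Ioi (0:ℝ)))
            (nhds (X t0 ω)) := by
          rw [hfun, hX t0 ω]
          exact hω.2.1.continuousWithinAt ht0
        exact (g.continuous.tendsto _).comp h1
    · have hint : ∫ ω, g (B 0 ω) ∂P = ∫ x, g x ∂α := by
        rw [← hBlaw 0]
        exact (integral_map (hBm 0) g.continuous.aestronglyMeasurable).symm
      rw [← hint]
      apply tendsto_integral_filter_of_dominated_convergence (fun _ => ‖g‖)
      · filter_upwards [self_mem_nhdsWithin] with t ht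
        exact hGm t ht
      · filter_upwards with t
        filter_upwards with ω
        exact g.norm_coe_le_norm _
      · exact integrable_const _
      · filter_upwards [hmain] with ω hω
        have hfun : (fun t : ℝ => X t ω) = fun t : ℝ => ∑' n,
            ((∏ j ∈ Finset.range n, U j ω) ^ ((1:ℝ)/t) * (1 - U n ω ^ ((1:ℝ)/t))) • B n ω :=
          funext fun t => hX t ω
        have h1 : Filter.Tendsto (fun t : ℝ => X t ω) (nhdsWithin 0 (Set.Ioi (0:ℝ)))
            (nhds (B 0 ω)) := by
          rw [hfun]
          exact hω.2.2
        exact (g.continuous.tendsto _).comp h1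

end
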